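/- Let (𝒜, A, A') be a quasi-twilled associative algebra over a field K with projection p : 𝒜 → A determined by the decomposition 𝒜 = A ⊕ A', and let D : A → A' be a linear map such that the graph {x + D(x) : x ∈ A} is closed under the multiplication of 𝒜 (i.e., D is a right deformation map). Then the bilinear operation π^D on A defined by π^D(x,y) = p((x + D(x))·(y + D(y))) is associative, i.e., (A, π^D) is an associative algebra. -/

import Mathlib

/-- `π^D(x,y) = p((x + D(x))·(y + D(y)))`, where `p` is the projection onto `A`
along `A'`. -/
noncomputable def piD {K 𝓐 : Type*} [Field K] [AddCommGroup 𝓐] [Module K 𝓐]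
    (m : 𝓐 →ₗ[K] 𝓐 →ₗ[K] 𝓐)
    {A A' : Submodule K 𝓐} (hcompl : IsCompl A A') (D : A →ₗ[K] A') (x y : A) : A :=
  A.linearProjOfIsCompl A' hcompl
    (m ((x : 𝓐) + ((D x : A') : 𝓐)) ((y : 𝓐) + ((D y : A') : 𝓐)))

/-- if `D : A → A'` is a right deformation map of a quasi-twilled
associative algebra `(𝒜, A, A')` (its graph is closed under the multiplication),
then `π^D` is an associative product on `A`. -/
theorem stmt11 {K 𝓐 : Type*} [Field K] [AddCommGroup 𝓐] [Module K 𝓐]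
    (m : 𝓐 →ₗ[K] 𝓐 →ₗ[K] 𝓐)
    (assoc : ∀ a b c : 𝓐, m (m a b) c = m a (m b c))
    (A A' : Submodule K 𝓐) (hcompl : IsCompl A A')
    (hA' : ∀ u ∈ A', ∀ v ∈ A', m u v ∈ A')
    (D : A →ₗ[K] A')
    (hgr : ∀ x y : A, ∃ z : A,
      m ((x : 𝓐) + ((D x : A') : 𝓐)) ((y : 𝓐) + ((D y : A') : 𝓐))
        = (z : 𝓐) + ((D z : A') : 𝓐)) :
    ∀ x y z : A,
      piD m hcompl D (piD m hcompl D x y) z = piD m hcompl D x (piD m hcompl D y z) := by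
  have key : ∀ x y : A,
      ((piD m hcompl D x y : 𝓐) + ((D (piD m hcompl D x y) : A') : 𝓐))
        = m ((x : 𝓐) + ((D x : A') : 𝓐)) ((y : 𝓐) + ((D y : A') : 𝓐)) := by
    intro x y
    obtain ⟨z, hz⟩ := hgr x y
    have hp : piD m hcompl D x y = z := by
      unfold piD
      rw [hz]
      simp [Submodule.linearProjOfIsCompl, Submodule.projectionOnto_apply_left,
        Submodule.projectionOnto_apply_right hcompl]
    rw [hp, hz]
  intro x y z
  have h : ∀ a b : A, piD m hcompl D a b
      = A.linearProjOfIsCompl A' hcompl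
        (m ((a : 𝓐) + ((D a : A') : 𝓐)) ((b : 𝓐) + ((D b : A') : 𝓐))) :=
    fun _ _ => rfl
  rw [h (piD m hcompl D x y) z, h x (piD m hcompl D y z), key x y, key y z, assoc]
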